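/- Let N ≥ 1 be an integer, p > 0 and ρ ≥ 0 real. Then (1/(N−1)!) · ∫₀^∞ (e^{−u}/(p+u)) · D^{N−1}(u) du = ((−1)^{N−1}/(N−1)!) · ∫₀^∞ (e^{−tp}/(1+t)) · (t/(1+t))^{N−1} · e^{−ρ t/(1+t)} dt, where D^{N−1}(u) denotes the (N−1)-st derivative at v = ρ of the function v ↦ e^{−v} ₀F₁(1; vu). (This is Proposition 5 of the paper, with ρ = |z|² and with the contour integral (1/2πi)∮_C e^{−v}₀F₁(1;vu)/(v−ρ)^N dv around the order-N pole evaluated as a derivative.) -/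

import Mathlib

open MeasureTheory Finset Matrix

/-- The entire function `₀F₁(1;x) = ∑ xⁿ/(n!)²` (real argument). -/
noncomputable def f01 (x : ℝ) : ℝ := ∑' n : ℕ, x ^ n / ((n.factorial : ℝ)) ^ 2

/-- The entire function `₀F₁(1;x) = ∑ xⁿ/(n!)²` (complex argument). -/
noncomputable def f01C (x : ℂ) : ℂ := ∑' n : ℕ, x ^ n / ((n.factorial : ℂ)) ^ 2

/-- Vandermonde product `Δ(x₁,…,x_m) = ∏_{i<j} (x_j − x_i)`. -/
noncomputable def vand {m : ℕ} (x : Fin m → ℝ) : ℝ :=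
  ∏ p ∈ Finset.univ.filter (fun p : Fin m × Fin m => p.1 < p.2), (x p.2 - x p.1)

/-- The nonnegative orthant `[0,∞)^m`. -/
def orth (m : ℕ) : Set (Fin m → ℝ) := Set.univ.pi fun _ => Set.Ici (0 : ℝ)

/-- The joint density `Δ(x)·det(₀F₁(1;ω_k x_j))·∏ x_i^L e^{−x_i}` of the squared
singular values. -/
noncomputable def dens (N L : ℕ) (ω : Fin N → ℝ) (x : Fin N → ℝ) : ℝ :=
  vand x * Matrix.det (Matrix.of fun k j : Fin N => f01 (ω k * x j)) *
    ∏ i, (x i ^ L * Real.exp (-x i))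

/-- The matrix weight `w(X) = exp(−Tr(XX*)+Tr(ΩX)+Tr(X*Ω*))·det(X*X)^L`
(complex-valued; its value is in fact real). -/
noncomputable def W (N L : ℕ) (Ω X : Matrix (Fin N) (Fin N) ℂ) : ℂ :=
  Complex.exp (-Matrix.trace (X * Xᴴ) + Matrix.trace (Ω * X) + Matrix.trace (Xᴴ * Ωᴴ)) *
    Matrix.det (Xᴴ * X) ^ L

/-- Matrix-model average `⟨h⟩ = (∫ h(X) w(X) dX)/(∫ w(X) dX)`, the integrals being
over Lebesgue measure on the 2N² real coordinates of X. -/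
noncomputable def mavg (N L : ℕ) (Ω : Matrix (Fin N) (Fin N) ℂ)
    (h : Matrix (Fin N) (Fin N) ℂ → ℂ) : ℂ :=
  (∫ X : Fin N → Fin N → ℂ, h (Matrix.of X) * W N L Ω (Matrix.of X)) /
    ∫ X : Fin N → Fin N → ℂ, W N L Ω (Matrix.of X)

/-- Eigenvalue-ensemble average `E_{ω,L}[g]` with respect to the density `dens`. -/
noncomputable def Eavg (N L : ℕ) (ω : Fin N → ℝ) (g : (Fin N → ℝ) → ℂ) : ℂ :=
  (∫ x in orth N, g x * (dens N L ω x : ℂ)) /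
    ((∫ x in orth N, dens N L ω x : ℝ) : ℂ)

/-- The normalization `Ñ_L = ∫_{[0,∞)^L} ∏_{i,j}(t_i+ω_j)·Δ(t)²·∏ e^{−t_i} dt`. -/
noncomputable def Ntilde (N L : ℕ) (ω : Fin N → ℝ) : ℝ :=
  ∫ t in orth L, (∏ i, ∏ j, (t i + ω j)) * vand t ^ 2 * ∏ i, Real.exp (-(t i))

/-- The degenerate normalization `Ñ_L(ρ) = ∫_{[0,∞)^L} ∏ (t_i+ρ)^N·Δ(t)²·∏ e^{−t_i} dt`. -/
noncomputable def NtildeDeg (N L : ℕ) (ρ : ℝ) : ℝ :=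
  ∫ t in orth L, (∏ i, (t i + ρ) ^ N) * vand t ^ 2 * ∏ i, Real.exp (-(t i))

/-- The Laguerre polynomial `L_n(x) = ∑_{k=0}^n (n choose k)(−x)^k/k!`. -/
noncomputable def laguerre (n : ℕ) (x : ℝ) : ℝ :=
  ∑ k ∈ Finset.range (n + 1), (n.choose k : ℝ) * (-x) ^ k / (k.factorial : ℝ)

/-- The monic Laguerre polynomial `π_n(x) = (−1)^n n! L_n(x)`. -/
noncomputable def piL (n : ℕ) (x : ℝ) : ℝ := (-1 : ℝ) ^ n * (n.factorial : ℝ) * laguerre n x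

/-- The Bessel function `J_k(x) = ∑_m (−1)^m (x/2)^{2m+k}/(m!(m+k)!)`. -/
noncomputable def besselJ (k : ℕ) (x : ℝ) : ℝ :=
  ∑' m : ℕ, (-1 : ℝ) ^ m * (x / 2) ^ (2 * m + k) / ((m.factorial : ℝ) * ((m + k).factorial : ℝ))

/-- The moment matrix `G_{i,j} = (i−1)!·e^{ω_j}·L_{i−1}(−ω_j)` (0-based indices). -/
noncomputable def Gmat (N : ℕ) (ω : Fin N → ℝ) : Matrix (Fin N) (Fin N) ℝ :=
  Matrix.of fun i j => ((i : ℕ).factorial : ℝ) * Real.exp (ω j) * laguerre (i : ℕ) (-ω j)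


noncomputable def qq : ℕ → ℕ → ℝ → ℝ
  | 0, m, v => v ^ m * Real.exp (-v)
  | (n+1), m, v => m * qq n (m-1) v - qq n m v

lemma qq_hasDeriv (n m : ℕ) (v : ℝ) : HasDerivAt (fun w => qq n m w) (qq (n+1) m v) v := by
  induction n generalizing m with
  | zero =>
    have h1 : HasDerivAt (fun w : ℝ => w ^ m) ((m:ℝ) * v ^ (m-1)) v := hasDerivAt_pow m v
    have h2 : HasDerivAt (fun w : ℝ => Real.exp (-w)) (-Real.exp (-v)) v := by
      have h := ((Real.hasDerivAt_exp (-v)).comp v (hasDerivAt_neg v))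
      simp only [mul_neg, mul_one] at h
      exact h
    have h := h1.mul h2
    simp only [qq]
    exact h.congr_deriv (by ring)
  | succ n ih =>
    have h := ((ih (m-1)).const_mul (m:ℝ)).sub (ih m)
    simp only [qq]
    exact h.congr_deriv (by simp only [qq])

lemma qq_bound (n m : ℕ) (v : ℝ) :
    |qq n m v| ≤ ((m:ℝ) + n) ^ n * (|v| + 1) ^ m * Real.exp (-v) := by
  induction n generalizing m with
  | zero =>
    simp only [qq, Nat.cast_zero, add_zero, pow_zero, one_mul]
    rw [abs_mul, abs_pow, abs_of_pos (Real.exp_pos _)]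
    gcongr
    all_goals linarith [abs_nonneg v]
  | succ n ih =>
    have h1 := ih (m-1)
    have h2 := ih m
    have hE : (0:ℝ) < Real.exp (-v) := Real.exp_pos _
    have hB : (0:ℝ) ≤ (|v| + 1) ^ m := by positivity
    have hBm : (|v| + 1) ^ (m-1) ≤ (|v| + 1) ^ m := by
      apply pow_le_pow_right₀ (by linarith [abs_nonneg v]) (Nat.sub_le m 1)
    have hc1 : ((m-1:ℕ):ℝ) + n ≤ (m:ℝ) + (n+1) := by
      have : ((m-1:ℕ):ℝ) ≤ (m:ℝ) := by exact_mod_cast Nat.sub_le m 1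
      linarith
    have hA1 : (((m-1:ℕ):ℝ) + n) ^ n ≤ ((m:ℝ) + (n+1)) ^ n := by
      apply pow_le_pow_left₀ (by positivity) hc1
    have hA2 : ((m:ℝ) + n) ^ n ≤ ((m:ℝ) + (n+1)) ^ n := by
      apply pow_le_pow_left₀ (by positivity) (by linarith)
    calc |qq (n+1) m v| ≤ (m:ℝ) * |qq n (m-1) v| + |qq n m v| := by
          simp only [qq]
          calc |(m:ℝ) * qq n (m-1) v - qq n m v| ≤ |(m:ℝ) * qq n (m-1) v| + |qq n m v| :=
                abs_sub _ _
            _ = (m:ℝ) * |qq n (m-1) v| + |qq n m v| := by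
                rw [abs_mul, Nat.abs_cast]
      _ ≤ (m:ℝ) * ((((m-1:ℕ):ℝ) + n) ^ n * (|v| + 1) ^ (m-1) * Real.exp (-v)) +
            ((m:ℝ) + n) ^ n * (|v| + 1) ^ m * Real.exp (-v) := by
          gcongr <;> first | exact Nat.cast_nonneg m | skip
      _ ≤ (m:ℝ) * (((m:ℝ) + (n+1)) ^ n * (|v| + 1) ^ m * Real.exp (-v)) +
            ((m:ℝ) + (n+1)) ^ n * (|v| + 1) ^ m * Real.exp (-v) := by
          gcongr <;> first | exact Nat.cast_nonneg m | skip
      _ = ((m:ℝ) + 1) * (((m:ℝ) + (n+1)) ^ n * (|v| + 1) ^ m * Real.exp (-v)) := by ring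
      _ ≤ ((m:ℝ) + (n+1)) * (((m:ℝ) + (n+1)) ^ n * (|v| + 1) ^ m * Real.exp (-v)) := by
          gcongr ?_ * _
          · push_cast; linarith
      _ = ((m:ℝ) + ((n+1:ℕ):ℝ)) ^ (n+1) * (|v| + 1) ^ m * Real.exp (-v) := by push_cast; ring
  

lemma exp_tsum (x : ℝ) : Real.exp x = ∑' k : ℕ, x ^ k / (k.factorial : ℝ) := by
  rw [Real.exp_eq_exp_ℝ, NormedSpace.exp_eq_tsum_div]

lemma pow_div_factorial_le_exp (x : ℝ) (hx : 0 ≤ x) (k : ℕ) :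
    x ^ k / (k.factorial : ℝ) ≤ Real.exp x := by
  rw [exp_tsum]
  exact Summable.le_tsum (Real.summable_pow_div_factorial x) k (fun j _ => by positivity)

lemma sumS1 (a b : ℕ) (y : ℝ) :
    Summable (fun m : ℕ => ((m:ℝ) + a) ^ b * y ^ m / (m.factorial : ℝ)) := by
  have hgeom : Summable (fun k : ℕ => ((k:ℝ)) ^ b * (1/2 : ℝ) ^ k) :=
    summable_pow_mul_geometric_of_norm_lt_one b (by rw [Real.norm_eq_abs]; rw [abs_of_pos]; norm_num; norm_num)
  have hshift : Summable (fun m : ℕ => (((m + a : ℕ)):ℝ) ^ b * (1/2:ℝ) ^ (m + a)) :=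
    hgeom.comp_injective (add_left_injective a)
  have hmaj : Summable (fun m : ℕ =>
      ((2:ℝ)^a * Real.exp (2*|y|)) * ((((m + a : ℕ)):ℝ) ^ b * (1/2:ℝ) ^ (m + a))) :=
    hshift.mul_left _
  apply Summable.of_norm_bounded hmaj
  intro m
  have hnorm : ‖((m:ℝ) + a) ^ b * y ^ m / (m.factorial : ℝ)‖
      = ((m:ℝ) + a) ^ b * |y| ^ m / (m.factorial : ℝ) := by
    rw [Real.norm_eq_abs, abs_div, abs_mul, abs_pow, abs_pow, Nat.abs_cast,
      abs_of_nonneg (by positivity : (0:ℝ) ≤ (m:ℝ) + a)]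
  rw [hnorm]
  have h1 : |y| ^ m / (m.factorial : ℝ) ≤ (1/2:ℝ)^m * Real.exp (2*|y|) := by
    have h2 := pow_div_factorial_le_exp (2*|y|) (by positivity) m
    have e : |y| ^ m = (1/2:ℝ)^m * (2*|y|)^m := by
      rw [← mul_pow]; congr 1; ring
    rw [e, mul_div_assoc]
    exact mul_le_mul_of_nonneg_left h2 (by positivity)
  calc ((m:ℝ) + a) ^ b * |y| ^ m / (m.factorial : ℝ)
      = ((m:ℝ) + a) ^ b * (|y| ^ m / (m.factorial : ℝ)) := by ring
    _ ≤ ((m:ℝ) + a) ^ b * ((1/2:ℝ)^m * Real.exp (2*|y|)) := by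
        apply mul_le_mul_of_nonneg_left h1 (by positivity)
    _ = ((2:ℝ)^a * Real.exp (2*|y|)) * ((((m + a : ℕ)):ℝ) ^ b * (1/2:ℝ) ^ (m + a)) := by
        push_cast
        rw [pow_add]
        have : ((1:ℝ)/2) ^ a * 2 ^ a = 1 := by
          rw [one_div, inv_pow, inv_mul_cancel₀ (by positivity : ((2:ℝ)^a) ≠ 0)]
        linear_combination (-(((m:ℝ) + a) ^ b * (1/2:ℝ)^m * Real.exp (2*|y|))) * this

lemma sumS2 (a b : ℕ) (y : ℝ) :
    Summable (fun m : ℕ => ((m:ℝ) + a) ^ b * y ^ m / (m.factorial : ℝ)^2) := by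
  apply Summable.of_norm_bounded (sumS1 a b |y|)
  intro m
  have h1 : (1:ℝ) ≤ (m.factorial : ℝ) := by exact_mod_cast Nat.one_le_iff_ne_zero.2 m.factorial_pos.ne'
  have hnorm : ‖((m:ℝ) + a) ^ b * y ^ m / (m.factorial : ℝ)^2‖
      = ((m:ℝ) + a) ^ b * |y| ^ m / (m.factorial : ℝ)^2 := by
    rw [Real.norm_eq_abs, abs_div, abs_mul, abs_pow, abs_pow, abs_pow, Nat.abs_cast,
      abs_of_nonneg (by positivity : (0:ℝ) ≤ (m:ℝ) + a)]
  rw [hnorm]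
  gcongr
  exact le_self_pow₀ h1 two_ne_zero
lemma sumG (n : ℕ) (u v : ℝ) :
    Summable (fun m : ℕ => u ^ m / (m.factorial : ℝ)^2 * qq n m v) := by
  apply Summable.of_norm_bounded ((sumS2 n n (|u| * (|v| + 1))).mul_right (Real.exp (-v)))
  intro m
  rw [Real.norm_eq_abs, abs_mul, abs_div, abs_pow, abs_pow, Nat.abs_cast]
  calc |u| ^ m / (m.factorial:ℝ)^2 * |qq n m v|
      ≤ |u| ^ m / (m.factorial:ℝ)^2 * (((m:ℝ) + n) ^ n * (|v| + 1) ^ m * Real.exp (-v)) := by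
        apply mul_le_mul_of_nonneg_left (qq_bound n m v) (by positivity)
    _ = ((m:ℝ) + n) ^ n * (|u| * (|v| + 1)) ^ m / (m.factorial:ℝ)^2 * Real.exp (-v) := by
        rw [mul_pow]; ring

lemma iter_deriv_eq (u : ℝ) (n : ℕ) (v : ℝ) :
    iteratedDeriv n (fun w => Real.exp (-w) * f01 (w * u)) v
      = ∑' m : ℕ, u ^ m / ((m.factorial : ℝ))^2 * qq n m v := by
  induction n generalizing v with
  | zero =>
    rw [iteratedDeriv_zero]
    show Real.exp (-v) * f01 (v * u) = _
    rw [f01, ← tsum_mul_left]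
    exact tsum_congr fun m => by simp only [qq]; rw [mul_pow]; ring
  | succ n ih =>
    rw [iteratedDeriv_succ]
    have hfun : iteratedDeriv n (fun w => Real.exp (-w) * f01 (w * u))
        = fun w => ∑' m : ℕ, u ^ m / ((m.factorial : ℝ))^2 * qq n m w := funext fun w => ih w
    rw [hfun]
    have husum : Summable (fun m : ℕ =>
        ((m:ℝ) + ((n+1:ℕ):ℝ)) ^ (n+1) * (|u| * (|v| + 2)) ^ m / (m.factorial:ℝ)^2
          * Real.exp (|v| + 1)) := by
      exact (sumS2 (n+1) (n+1) (|u| * (|v| + 2))).mul_right _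
    have hd : HasDerivAt (fun w => ∑' m : ℕ, u ^ m / ((m.factorial : ℝ))^2 * qq n m w)
        (∑' m : ℕ, u ^ m / ((m.factorial : ℝ))^2 * qq (n+1) m v) v := by
      apply hasDerivAt_tsum_of_isPreconnected husum (isOpen_Ioo (a := -(|v|+1)) (b := |v|+1))
        isPreconnected_Ioo (y₀ := v) (y := v)
      · intro m w _
        exact (qq_hasDeriv n m w).const_mul (u ^ m / ((m.factorial : ℝ))^2)
      · intro m w hw
        have hw1 : |w| ≤ |v| + 1 := by
          rcases hw with ⟨h1, h2⟩
          rw [abs_le]; constructor <;> linarith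
        rw [Real.norm_eq_abs, abs_mul, abs_div, abs_pow, abs_pow, Nat.abs_cast]
        calc |u| ^ m / (m.factorial:ℝ)^2 * |qq (n+1) m w|
            ≤ |u| ^ m / (m.factorial:ℝ)^2 *
              (((m:ℝ) + ((n+1:ℕ):ℝ)) ^ (n+1) * (|w| + 1) ^ m * Real.exp (-w)) := by
              apply mul_le_mul_of_nonneg_left (qq_bound (n+1) m w) (by positivity)
          _ ≤ |u| ^ m / (m.factorial:ℝ)^2 *
              (((m:ℝ) + ((n+1:ℕ):ℝ)) ^ (n+1) * (|v| + 2) ^ m * Real.exp (|v| + 1)) := by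
              apply mul_le_mul_of_nonneg_left _ (by positivity)
              have he : Real.exp (-w) ≤ Real.exp (|v| + 1) := by
                apply Real.exp_le_exp.2
                calc -w ≤ |w| := neg_le_abs w
                  _ ≤ |v| + 1 := hw1
              exact mul_le_mul
                (mul_le_mul le_rfl (pow_le_pow_left₀ (by positivity) (by linarith) m)
                  (by positivity) (by positivity))
                he (Real.exp_pos _).le (by positivity)
          _ = ((m:ℝ) + ((n+1:ℕ):ℝ)) ^ (n+1) * (|u| * (|v| + 2)) ^ m / (m.factorial:ℝ)^2
                * Real.exp (|v| + 1) := by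
              rw [mul_pow]; ring
      · exact Set.mem_Ioo.2 ⟨by linarith [neg_abs_le v], by linarith [le_abs_self v]⟩
      · exact sumG n u v
      · exact Set.mem_Ioo.2 ⟨by linarith [neg_abs_le v], by linarith [le_abs_self v]⟩
    exact hd.deriv

lemma contG (n : ℕ) (v : ℝ) :
    Continuous (fun u : ℝ => ∑' m : ℕ, u ^ m / ((m.factorial : ℝ))^2 * qq n m v) := by
  rw [continuous_iff_continuousAt]
  intro u0
  have hsum : Summable (fun m : ℕ =>
      ((m:ℝ)+n)^n * ((|u0|+1) * (|v|+1))^m / (m.factorial:ℝ)^2 * Real.exp (-v)) :=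
    (sumS2 n n _).mul_right _
  have ht : TendstoUniformlyOn
      (fun (s : Finset ℕ) (x : ℝ) => ∑ m ∈ s, x ^ m / ((m.factorial : ℝ))^2 * qq n m v)
      (fun x => ∑' m : ℕ, x ^ m / ((m.factorial : ℝ))^2 * qq n m v) Filter.atTop
      (Set.Ioo (-(|u0|+1)) (|u0|+1)) := by
    apply tendstoUniformlyOn_tsum hsum
    intro m x hx
    have hx1 : |x| ≤ |u0| + 1 := by
      rcases hx with ⟨h1, h2⟩
      rw [abs_le]; constructor <;> linarith
    rw [Real.norm_eq_abs, abs_mul, abs_div, abs_pow, abs_pow, Nat.abs_cast]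
    calc |x| ^ m / (m.factorial:ℝ)^2 * |qq n m v|
        ≤ (|u0|+1) ^ m / (m.factorial:ℝ)^2 * (((m:ℝ) + n) ^ n * (|v| + 1) ^ m * Real.exp (-v)) := by
          apply mul_le_mul (by gcongr) (qq_bound n m v) (abs_nonneg _) (by positivity)
      _ = ((m:ℝ)+n)^n * ((|u0|+1) * (|v|+1))^m / (m.factorial:ℝ)^2 * Real.exp (-v) := by
          rw [mul_pow]; ring
  have hco : ContinuousOn (fun x : ℝ => ∑' m : ℕ, x ^ m / ((m.factorial : ℝ))^2 * qq n m v)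
      (Set.Ioo (-(|u0|+1)) (|u0|+1)) := by
    apply ht.continuousOn
    refine Filter.Eventually.frequently (Filter.Eventually.of_forall ?_)
    intro s
    apply Continuous.continuousOn
    exact continuous_finset_sum s fun m _ =>
      (((continuous_pow m).div_const _).mul continuous_const)
  apply hco.continuousAt
  apply Ioo_mem_nhds <;> linarith [neg_abs_le u0, le_abs_self u0]
lemma two_mul_factorial_le (m : ℕ) :
    (((2*m).factorial : ℕ) : ℝ) ≤ 4^m * ((m.factorial:ℝ))^2 := by
  have h1 : (2*m).choose m * (m.factorial * m.factorial) = (2*m).factorial := by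
    have := Nat.choose_mul_factorial_mul_factorial (Nat.le_mul_of_pos_left m two_pos)
    rw [show 2*m - m = m by omega] at this
    linarith [this]
  have h2 : (2*m).choose m ≤ 4^m := by
    calc (2*m).choose m ≤ ∑ i ∈ Finset.range (2*m+1), (2*m).choose i :=
          Finset.single_le_sum (fun i _ => Nat.zero_le _) (by simp; omega)
      _ = 2^(2*m) := Nat.sum_range_choose (2*m)
      _ = 4^m := by rw [pow_mul]; norm_num
  have := Nat.mul_le_mul_right (m.factorial * m.factorial) h2
  rw [h1] at this
  calc (((2*m).factorial : ℕ) : ℝ) ≤ ((4^m * (m.factorial * m.factorial) : ℕ) : ℝ) := by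
        exact_mod_cast this
    _ = 4^m * ((m.factorial:ℝ))^2 := by push_cast; ring

lemma sum_sq_fact (w : ℝ) : Summable (fun m : ℕ => (w^2)^m / (((2*m).factorial : ℕ) : ℝ)) := by
  have h := (Real.summable_pow_div_factorial |w|).comp_injective
    (mul_right_injective₀ two_ne_zero : Function.Injective (fun m : ℕ => 2*m))
  apply Summable.of_norm_bounded h
  intro m
  simp only [Function.comp]
  have habs : |(w^2)^m| = |w|^(2*m) := by rw [abs_pow, abs_pow, ← pow_mul]
  rw [Real.norm_eq_abs, abs_div, habs, Nat.abs_cast]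

lemma tsum_sq_fact_le (w : ℝ) (hw : 0 ≤ w) :
    ∑' m : ℕ, (w^2)^m / (((2*m).factorial : ℕ) : ℝ) ≤ Real.exp w := by
  rw [exp_tsum]
  apply Summable.tsum_le_tsum_of_inj (fun m : ℕ => 2*m) (mul_right_injective₀ two_ne_zero)
    (fun c _ => by positivity) _ (sum_sq_fact w) (Real.summable_pow_div_factorial w)
  intro m
  rw [← pow_mul]

lemma Gbound (n : ℕ) (ρ : ℝ) (hρ : 0 ≤ ρ) (u : ℝ) (hu : 0 ≤ u) :
    |∑' m : ℕ, u ^ m / ((m.factorial : ℝ))^2 * qq n m ρ|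
      ≤ (n.factorial : ℝ) * Real.exp n * Real.exp (2 * Real.exp 1 * (ρ+1)) * Real.exp (u/2) := by
  set w : ℝ := Real.sqrt (4 * Real.exp 1 * (u * (ρ+1))) with hwdef
  have hw0 : 0 ≤ w := Real.sqrt_nonneg _
  have hw2 : w^2 = 4 * Real.exp 1 * (u * (ρ+1)) := Real.sq_sqrt (by positivity)
  have key : ∀ m : ℕ, ‖u ^ m / ((m.factorial : ℝ))^2 * qq n m ρ‖
      ≤ (n.factorial : ℝ) * Real.exp n * ((w^2)^m / (((2*m).factorial : ℕ) : ℝ)) := by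
    intro m
    have hq := qq_bound n m ρ
    have habs : |ρ| = ρ := abs_of_nonneg hρ
    rw [habs] at hq
    have hfac : (0:ℝ) < (m.factorial:ℝ) := by exact_mod_cast m.factorial_pos
    have h2fac : (0:ℝ) < (((2*m).factorial : ℕ) : ℝ) := by exact_mod_cast (2*m).factorial_pos
    rw [Real.norm_eq_abs, abs_mul, abs_div, abs_pow, abs_pow, Nat.abs_cast,
      abs_of_nonneg hu]
    calc u ^ m / (m.factorial:ℝ)^2 * |qq n m ρ|
        ≤ u ^ m / (m.factorial:ℝ)^2 * (((m:ℝ) + n) ^ n * (ρ + 1) ^ m * Real.exp (-ρ)) :=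
          mul_le_mul_of_nonneg_left hq (by positivity)
      _ ≤ u ^ m / (m.factorial:ℝ)^2 * (((m:ℝ) + n) ^ n * (ρ + 1) ^ m * 1) := by
          apply mul_le_mul_of_nonneg_left _ (by positivity)
          apply mul_le_mul_of_nonneg_left _ (by positivity)
          exact Real.exp_le_one_iff.2 (by linarith)
      _ = ((m:ℝ) + n) ^ n * ((u * (ρ+1)) ^ m / (m.factorial:ℝ)^2) := by
          simp only [mul_pow]; ring
      _ ≤ ((n.factorial : ℝ) * Real.exp ((m:ℝ) + n)) * ((u * (ρ+1)) ^ m / (m.factorial:ℝ)^2) := by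
          apply mul_le_mul_of_nonneg_right _ (by positivity)
          have := pow_div_factorial_le_exp ((m:ℝ) + n) (by positivity) n
          rw [div_le_iff₀ (by exact_mod_cast n.factorial_pos : (0:ℝ) < (n.factorial:ℝ))] at this
          linarith [this]
      _ = (n.factorial : ℝ) * Real.exp n * ((Real.exp 1 ^ m * (u * (ρ+1)) ^ m) / (m.factorial:ℝ)^2) := by
          rw [Real.exp_add]
          have : Real.exp (m:ℝ) = Real.exp 1 ^ m := by
            rw [← Real.exp_nat_mul]; norm_num
          rw [this]; ring
      _ ≤ (n.factorial : ℝ) * Real.exp n * ((w^2)^m / (((2*m).factorial : ℕ) : ℝ)) := by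
          apply mul_le_mul_of_nonneg_left _ (by positivity)
          rw [hw2, div_le_div_iff₀ (by positivity) h2fac]
          calc Real.exp 1 ^ m * (u * (ρ+1)) ^ m * (((2*m).factorial : ℕ) : ℝ)
              ≤ Real.exp 1 ^ m * (u * (ρ+1)) ^ m * (4^m * ((m.factorial:ℝ))^2) := by
                apply mul_le_mul_of_nonneg_left (two_mul_factorial_le m) (by positivity)
            _ = (4 * Real.exp 1 * (u * (ρ+1)))^m * (m.factorial:ℝ)^2 := by
                simp only [mul_pow]; ring
  have hsum1 : Summable (fun m : ℕ => ‖u ^ m / ((m.factorial : ℝ))^2 * qq n m ρ‖) :=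
    (sumG n u ρ).abs
  have hsum2 : Summable (fun m : ℕ =>
      (n.factorial : ℝ) * Real.exp n * ((w^2)^m / (((2*m).factorial : ℕ) : ℝ))) :=
    (sum_sq_fact w).mul_left _
  calc |∑' m : ℕ, u ^ m / ((m.factorial : ℝ))^2 * qq n m ρ|
      ≤ ∑' m : ℕ, ‖u ^ m / ((m.factorial : ℝ))^2 * qq n m ρ‖ := by
        rw [← Real.norm_eq_abs]
        exact norm_tsum_le_tsum_norm hsum1
    _ ≤ ∑' m : ℕ, (n.factorial : ℝ) * Real.exp n * ((w^2)^m / (((2*m).factorial : ℕ) : ℝ)) :=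
        Summable.tsum_le_tsum key hsum1 hsum2
    _ = (n.factorial : ℝ) * Real.exp n * ∑' m : ℕ, (w^2)^m / (((2*m).factorial : ℕ) : ℝ) :=
        tsum_mul_left
    _ ≤ (n.factorial : ℝ) * Real.exp n * Real.exp w := by
        apply mul_le_mul_of_nonneg_left (tsum_sq_fact_le w hw0) (by positivity)
    _ ≤ (n.factorial : ℝ) * Real.exp n * Real.exp (2 * Real.exp 1 * (ρ+1) + u/2) := by
        apply mul_le_mul_of_nonneg_left _ (by positivity)
        apply Real.exp_le_exp.2
        set A := Real.sqrt u with hA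
        set B := Real.sqrt (Real.exp 1 * (ρ+1)) with hB
        have hA2 : A^2 = u := Real.sq_sqrt hu
        have hB2 : B^2 = Real.exp 1 * (ρ+1) := Real.sq_sqrt (by positivity)
        have h2AB : (2*A*B)^2 = 4 * Real.exp 1 * (u * (ρ+1)) := by
          rw [mul_pow, mul_pow, hA2, hB2]; ring
        have htwAB : w = 2*A*B := by
          rw [hwdef, ← h2AB, Real.sqrt_sq (by positivity)]
        rw [htwAB]
        nlinarith [sq_nonneg (A - 2*B), hA2, hB2, Real.sqrt_nonneg u, Real.sqrt_nonneg (Real.exp 1 * (ρ+1))]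
    _ = (n.factorial : ℝ) * Real.exp n * Real.exp (2 * Real.exp 1 * (ρ+1)) * Real.exp (u/2) := by
        rw [Real.exp_add]; ring
open MeasureTheory in
lemma lap_int (m : ℕ) {s : ℝ} (hs : 0 < s) :
    IntegrableOn (fun u : ℝ => u ^ m * Real.exp (-(s*u))) (Set.Ioi 0) := by
  have h := integrableOn_rpow_mul_exp_neg_mul_rpow (p := 1) (s := (m:ℝ)) (b := s)
    (neg_one_lt_zero.trans_le (Nat.cast_nonneg m)) zero_lt_one hs
  apply h.congr_fun _ measurableSet_Ioi
  intro x hx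
  rw [Set.mem_Ioi] at hx
  show x ^ ((m:ℕ):ℝ) * Real.exp (-s * x ^ (1:ℝ)) = x ^ m * Real.exp (-(s*x))
  rw [Real.rpow_natCast, Real.rpow_one, neg_mul]

lemma lap (m : ℕ) {s : ℝ} (hs : 0 < s) :
    ∫ u in Set.Ioi (0:ℝ), u ^ m * Real.exp (-(s*u)) = (m.factorial : ℝ) / s^(m+1) := by
  have h := Real.integral_rpow_mul_exp_neg_mul_Ioi (a := (m:ℝ)+1) (r := s)
    (by positivity) hs
  simp only [add_sub_cancel_right] at h
  have heq : ∀ x ∈ Set.Ioi (0:ℝ), x ^ ((m:ℝ)) * Real.exp (-(s*x)) = x ^ m * Real.exp (-(s*x)) := by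
    intro x hx
    rw [Set.mem_Ioi] at hx
    rw [Real.rpow_natCast]
  rw [MeasureTheory.setIntegral_congr_fun measurableSet_Ioi heq] at h
  rw [h]
  have hg : Real.Gamma ((m:ℝ)+1) = (m.factorial : ℝ) := by
    exact_mod_cast Real.Gamma_nat_eq_factorial m
  rw [hg]
  have hr : ((1:ℝ)/s) ^ ((m:ℝ)+1) = (1/s)^(m+1) := by
    rw [show ((m:ℝ)+1) = ((m+1:ℕ):ℝ) by push_cast; ring, Real.rpow_natCast]
  rw [hr, div_pow, one_pow]
  ring
lemma sumQ1 (n : ℕ) (ρ x : ℝ) :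
    Summable (fun m : ℕ => qq n m ρ * x ^ m / (m.factorial:ℝ)) := by
  apply Summable.of_norm_bounded ((sumS1 n n ((|ρ|+1)*|x|)).mul_right (Real.exp (-ρ)))
  intro m
  rw [Real.norm_eq_abs, abs_div, abs_mul, abs_pow, Nat.abs_cast]
  calc |qq n m ρ| * |x| ^ m / (m.factorial:ℝ)
      ≤ ((m:ℝ) + n) ^ n * (|ρ| + 1) ^ m * Real.exp (-ρ) * |x| ^ m / (m.factorial:ℝ) := by
        rw [div_eq_mul_inv, div_eq_mul_inv]
        exact mul_le_mul_of_nonneg_right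
          (mul_le_mul_of_nonneg_right (qq_bound n m ρ) (by positivity)) (by positivity)
    _ = ((m:ℝ) + n) ^ n * ((|ρ|+1)*|x|) ^ m / (m.factorial:ℝ) * Real.exp (-ρ) := by
        simp only [mul_pow]; ring

lemma sumQ2 (n : ℕ) (ρ x : ℝ) :
    Summable (fun m : ℕ => (m:ℝ) * qq n (m-1) ρ * x ^ m / (m.factorial:ℝ)) := by
  apply Summable.of_norm_bounded
    ((sumS1 (n+1) (n+1) ((|ρ|+1)*|x|)).mul_right (Real.exp (-ρ)))
  intro m
  rw [Real.norm_eq_abs, abs_div, abs_mul, abs_mul, abs_pow, Nat.abs_cast, Nat.abs_cast]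
  have hq := qq_bound n (m-1) ρ
  have hc1 : ((m-1:ℕ):ℝ) + n ≤ (m:ℝ) + ((n+1:ℕ):ℝ) := by
    have : ((m-1:ℕ):ℝ) ≤ (m:ℝ) := by exact_mod_cast Nat.sub_le m 1
    push_cast
    linarith
  have hQ : |qq n (m-1) ρ| ≤ ((m:ℝ) + ((n+1:ℕ):ℝ)) ^ n * (|ρ|+1) ^ m * Real.exp (-ρ) := by
    calc |qq n (m-1) ρ| ≤ (((m-1:ℕ):ℝ) + n) ^ n * (|ρ| + 1) ^ (m-1) * Real.exp (-ρ) := hq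
      _ ≤ ((m:ℝ) + ((n+1:ℕ):ℝ)) ^ n * (|ρ|+1) ^ m * Real.exp (-ρ) := by
          apply mul_le_mul _ le_rfl (Real.exp_pos _).le (by positivity)
          exact mul_le_mul (pow_le_pow_left₀ (by positivity) hc1 n)
            (pow_le_pow_right₀ (by linarith [abs_nonneg ρ]) (Nat.sub_le m 1))
            (by positivity) (by positivity)
  have hm : (m:ℝ) ≤ (m:ℝ) + ((n+1:ℕ):ℝ) := by
    push_cast; linarith [Nat.cast_nonneg (α := ℝ) m]
  calc (m:ℝ) * |qq n (m-1) ρ| * |x| ^ m / (m.factorial:ℝ)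
      ≤ (((m:ℝ) + ((n+1:ℕ):ℝ)) * (((m:ℝ) + ((n+1:ℕ):ℝ)) ^ n * (|ρ|+1) ^ m * Real.exp (-ρ))
          * |x| ^ m) / (m.factorial:ℝ) := by
        rw [div_eq_mul_inv, div_eq_mul_inv]
        apply mul_le_mul_of_nonneg_right _ (by positivity)
        apply mul_le_mul_of_nonneg_right _ (by positivity)
        exact mul_le_mul hm hQ (abs_nonneg _) (by positivity)
    _ = ((m:ℝ) + ((n+1:ℕ):ℝ)) ^ (n+1) * ((|ρ|+1)*|x|) ^ m / (m.factorial:ℝ) * Real.exp (-ρ) := by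
        simp only [mul_pow]; ring

lemma Ssum (n : ℕ) (ρ x : ℝ) :
    ∑' m : ℕ, qq n m ρ * x ^ m / (m.factorial:ℝ) = (x - 1)^n * Real.exp (ρ * (x - 1)) := by
  induction n with
  | zero =>
    simp only [qq, pow_zero, one_mul]
    calc ∑' m : ℕ, ρ^m * Real.exp (-ρ) * x^m / (m.factorial:ℝ)
        = Real.exp (-ρ) * ∑' m : ℕ, (ρ*x)^m / (m.factorial:ℝ) := by
          rw [← tsum_mul_left]
          exact tsum_congr fun m => by rw [mul_pow]; ring
      _ = Real.exp (ρ * (x - 1)) := by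
          rw [← exp_tsum, ← Real.exp_add]
          congr 1
          ring
  | succ n ih =>
    have hA := sumQ2 n ρ x
    have hB := sumQ1 n ρ x
    have hshift : ∑' m : ℕ, (m:ℝ) * qq n (m-1) ρ * x ^ m / (m.factorial:ℝ)
        = x * ((x - 1)^n * Real.exp (ρ * (x - 1))) := by
      rw [Summable.tsum_eq_zero_add hA]
      have h0 : (0:ℝ) * qq n (0-1) ρ * x ^ 0 / ((Nat.factorial 0:ℕ):ℝ) = 0 := by
        norm_num
      rw [show ((0:ℕ):ℝ) * qq n (0-1) ρ * x ^ 0 / ((Nat.factorial 0:ℕ):ℝ) = 0 by norm_num]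
      rw [zero_add]
      have hterm : ∀ m : ℕ, ((m+1:ℕ):ℝ) * qq n ((m+1)-1) ρ * x ^ (m+1) / (((m+1).factorial:ℕ):ℝ)
          = x * (qq n m ρ * x ^ m / (m.factorial:ℝ)) := by
        intro m
        have hf : (((m+1).factorial:ℕ):ℝ) = ((m:ℝ)+1) * (m.factorial:ℝ) := by
          rw [Nat.factorial_succ]; push_cast; ring
        have hm1 : (m+1) - 1 = m := by omega
        rw [hm1, hf, pow_succ]
        have hfne : (m.factorial:ℝ) ≠ 0 := by
          exact_mod_cast m.factorial_pos.ne'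
        have hmne : ((m:ℝ)+1) ≠ 0 := by positivity
        push_cast
        field_simp
      rw [tsum_congr hterm, tsum_mul_left, ih]
    calc ∑' m : ℕ, qq (n+1) m ρ * x ^ m / (m.factorial:ℝ)
        = ∑' m : ℕ, ((m:ℝ) * qq n (m-1) ρ * x ^ m / (m.factorial:ℝ)
            - qq n m ρ * x ^ m / (m.factorial:ℝ)) := by
          exact tsum_congr fun m => by simp only [qq]; ring
      _ = (∑' m : ℕ, (m:ℝ) * qq n (m-1) ρ * x ^ m / (m.factorial:ℝ))
            - ∑' m : ℕ, qq n m ρ * x ^ m / (m.factorial:ℝ) := Summable.tsum_sub hA hB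
      _ = x * ((x - 1)^n * Real.exp (ρ * (x - 1))) - (x - 1)^n * Real.exp (ρ * (x - 1)) := by
          rw [hshift, ih]
      _ = (x - 1)^(n+1) * Real.exp (ρ * (x - 1)) := by ring
open MeasureTheory in
lemma lapG (n : ℕ) (ρ : ℝ) {s : ℝ} (hs : 0 < s) :
    ∫ u in Set.Ioi (0:ℝ),
        Real.exp (-(s*u)) * (∑' m : ℕ, u ^ m / ((m.factorial : ℝ))^2 * qq n m ρ)
      = (1/s) * (1/s - 1)^n * Real.exp (ρ * (1/s - 1)) := by
  have hfne : ∀ m : ℕ, ((m.factorial):ℝ) ≠ 0 := fun m => by exact_mod_cast m.factorial_pos.ne'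
  set F : ℕ → ℝ → ℝ :=
    fun m u => Real.exp (-(s*u)) * (u ^ m / ((m.factorial : ℝ))^2 * qq n m ρ) with hF
  have hFeq : ∀ m, F m
      = fun u => (qq n m ρ / ((m.factorial : ℝ))^2) * (u ^ m * Real.exp (-(s*u))) := by
    intro m; funext u; rw [hF]; ring
  have hint : ∀ m, Integrable (F m) (volume.restrict (Set.Ioi (0:ℝ))) := by
    intro m
    rw [hFeq m]
    exact ((lap_int m hs).const_mul _)
  have hnormval : ∀ m, (∫ u in Set.Ioi (0:ℝ), ‖F m u‖)
      = |qq n m ρ| / ((m.factorial : ℝ))^2 * ((m.factorial : ℝ) / s^(m+1)) := by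
    intro m
    rw [← lap m hs, ← integral_const_mul]
    apply setIntegral_congr_fun measurableSet_Ioi
    intro u hu
    rw [Set.mem_Ioi] at hu
    rw [hFeq m]
    simp only
    rw [Real.norm_eq_abs, abs_mul, abs_div, abs_mul, abs_pow, abs_pow, Nat.abs_cast,
      abs_of_pos hu, abs_of_pos (Real.exp_pos _)]
    try ring
  have hsummable : Summable (fun m => ∫ u in Set.Ioi (0:ℝ), ‖F m u‖) := by
    rw [summable_congr hnormval]
    apply Summable.of_nonneg_of_le (fun m => by positivity) _
      ((sumS1 n n ((|ρ|+1)/s)).mul_right (Real.exp (-ρ)/s))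
    intro m
    have hsp : (0:ℝ) < s^(m+1) := by positivity
    calc |qq n m ρ| / ((m.factorial : ℝ))^2 * ((m.factorial : ℝ) / s^(m+1))
        = |qq n m ρ| / ((m.factorial : ℝ) * s^(m+1)) := by
          field_simp [hfne m]
          try ring
      _ ≤ (((m:ℝ) + n) ^ n * (|ρ| + 1) ^ m * Real.exp (-ρ)) / ((m.factorial : ℝ) * s^(m+1)) := by
          rw [div_eq_mul_inv, div_eq_mul_inv]
          exact mul_le_mul_of_nonneg_right (qq_bound n m ρ) (by positivity)
      _ = ((m:ℝ) + n) ^ n * ((|ρ| + 1)/s) ^ m / (m.factorial:ℝ) * (Real.exp (-ρ)/s) := by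
          simp only [div_eq_mul_inv, mul_inv, inv_pow, pow_succ, mul_pow]
          ring
  have h1 : (fun u => Real.exp (-(s*u)) * (∑' m : ℕ, u ^ m / ((m.factorial : ℝ))^2 * qq n m ρ))
      = fun u => ∑' m : ℕ, F m u := by
    funext u
    exact (tsum_mul_left).symm
  rw [h1, ← integral_tsum_of_summable_integral_norm hint hsummable]
  have hval : ∀ m, (∫ u in Set.Ioi (0:ℝ), F m u)
      = qq n m ρ * (1/s)^m / (m.factorial:ℝ) * (1/s) := by
    intro m
    rw [hFeq m, integral_const_mul, lap m hs]
    rw [one_div, inv_pow, pow_succ]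
    field_simp [hfne m]
    try ring
  rw [tsum_congr hval, tsum_mul_right, Ssum n ρ (1/s)]
  ring
open MeasureTheory in
lemma hexpint {c : ℝ} (hc : 0 < c) :
    Integrable (fun u : ℝ => Real.exp (-(c*u))) (volume.restrict (Set.Ioi 0)) := by
  have h := lap_int 0 hc
  apply h.congr_fun _ measurableSet_Ioi
  intro x _
  simp


theorem statement7 (N : ℕ) (hN : 1 ≤ N) (p : ℝ) (hp : 0 < p) (ρ : ℝ) (hρ : 0 ≤ ρ) :
    (1 / ((N - 1).factorial : ℝ)) *
        ∫ u in Set.Ioi (0 : ℝ),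
          (Real.exp (-u) / (p + u)) *
            iteratedDeriv (N - 1) (fun v => Real.exp (-v) * f01 (v * u)) ρ =
      ((-1 : ℝ) ^ (N - 1) / ((N - 1).factorial : ℝ)) *
        ∫ t in Set.Ioi (0 : ℝ),
          (Real.exp (-(t * p)) / (1 + t)) * (t / (1 + t)) ^ (N - 1) *
            Real.exp (-(ρ * t / (1 + t))) := by
  set n := N - 1 with hn
  set G : ℝ → ℝ := fun u => ∑' m : ℕ, u ^ m / ((m.factorial : ℝ))^2 * qq n m ρ with hG
  have hGc : Continuous G := contG n ρ
  set K : ℝ := (n.factorial : ℝ) * Real.exp n * Real.exp (2 * Real.exp 1 * (ρ+1)) with hK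
  have hK0 : 0 ≤ K := by positivity
  have hGb : ∀ u : ℝ, 0 ≤ u → |G u| ≤ K * Real.exp (u/2) := fun u hu => Gbound n ρ hρ u hu
  set Φ : ℝ × ℝ → ℝ := fun z => Real.exp (-z.1) * Real.exp (-(z.2*(p+z.1))) * G z.1 with hΦ
  have hΦc : Continuous Φ := by
    apply Continuous.mul
    · apply Continuous.mul
      · exact Real.continuous_exp.comp continuous_fst.neg
      · exact Real.continuous_exp.comp (continuous_snd.mul (continuous_const.add continuous_fst)).neg
    · exact hGc.comp continuous_fst
  have hgint : Integrable (fun z : ℝ × ℝ => (K * Real.exp (-(2⁻¹*z.1))) * Real.exp (-(p*z.2)))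
      ((volume.restrict (Set.Ioi (0:ℝ))).prod (volume.restrict (Set.Ioi (0:ℝ)))) := by
    exact Integrable.mul_prod ((hexpint (by norm_num : (0:ℝ) < 2⁻¹)).const_mul K) (hexpint hp)
  have hΦint : Integrable Φ
      ((volume.restrict (Set.Ioi (0:ℝ))).prod (volume.restrict (Set.Ioi (0:ℝ)))) := by
    apply Integrable.mono' hgint hΦc.aestronglyMeasurable
    rw [Measure.prod_restrict]
    filter_upwards [ae_restrict_mem (measurableSet_Ioi.prod measurableSet_Ioi)] with z hz
    obtain ⟨hz1, hz2⟩ := hz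
    rw [Set.mem_Ioi] at hz1 hz2
    calc ‖Φ z‖ = Real.exp (-z.1) * Real.exp (-(z.2*(p+z.1))) * |G z.1| := by
          rw [Real.norm_eq_abs, hΦ]
          simp only
          rw [abs_mul, abs_mul, abs_of_pos (Real.exp_pos _), abs_of_pos (Real.exp_pos _)]
      _ ≤ Real.exp (-z.1) * Real.exp (-(p*z.2)) * (K * Real.exp (z.1/2)) := by
          apply mul_le_mul _ (hGb z.1 hz1.le) (abs_nonneg _) (by positivity)
          apply mul_le_mul le_rfl _ (Real.exp_pos _).le (Real.exp_pos _).le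
          apply Real.exp_le_exp.2
          nlinarith [mul_pos hz2 hz1]
      _ = (K * Real.exp (-(2⁻¹*z.1))) * Real.exp (-(p*z.2)) := by
          rw [show -(2⁻¹*z.1) = -z.1 + z.1/2 by ring, Real.exp_add]
          ring
  have hID : ∀ u : ℝ, iteratedDeriv n (fun v => Real.exp (-v) * f01 (v * u)) ρ = G u :=
    fun u => iter_deriv_eq u n ρ
  have step1 : ∀ u ∈ Set.Ioi (0:ℝ),
      (Real.exp (-u) / (p + u)) *
        iteratedDeriv n (fun v => Real.exp (-v) * f01 (v * u)) ρ
      = ∫ t in Set.Ioi (0:ℝ), Φ (u, t) := by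
    intro u hu
    rw [Set.mem_Ioi] at hu
    have hpu : 0 < p + u := by linarith
    rw [hID u]
    have h2 : (∫ t in Set.Ioi (0:ℝ), Φ (u, t))
        = (Real.exp (-u) * G u) * ∫ t in Set.Ioi (0:ℝ), Real.exp (-((p+u)*t)) := by
      rw [← integral_const_mul]
      apply setIntegral_congr_fun measurableSet_Ioi
      intro t _
      show Φ (u, t) = _
      rw [hΦ]
      simp only
      rw [show (p+u)*t = t*(p+u) by ring]
      ring
    have hlap := lap 0 hpu
    simp only [pow_zero, one_mul, Nat.factorial_zero, Nat.cast_one, pow_one] at hlap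
    rw [h2, hlap]
    ring
  have hswap : (∫ u in Set.Ioi (0:ℝ), ∫ t in Set.Ioi (0:ℝ), Φ (u, t))
      = ∫ t in Set.Ioi (0:ℝ), ∫ u in Set.Ioi (0:ℝ), Φ (u, t) := by
    exact integral_integral_swap hΦint
  have step2 : ∀ t ∈ Set.Ioi (0:ℝ), (∫ u in Set.Ioi (0:ℝ), Φ (u, t))
      = (-1:ℝ)^n * ((Real.exp (-(t*p)) / (1+t)) * (t/(1+t))^n * Real.exp (-(ρ*t/(1+t)))) := by
    intro t ht
    rw [Set.mem_Ioi] at ht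
    have h1t : 0 < 1 + t := by linarith
    have e1 : ∀ u : ℝ, Φ (u, t) = Real.exp (-(t*p)) * (Real.exp (-((1+t)*u)) * G u) := by
      intro u
      rw [hΦ]
      simp only
      rw [show Real.exp (-u) * Real.exp (-(t*(p+u))) * G u
          = (Real.exp (-u) * Real.exp (-(t*(p+u)))) * G u by ring,
        ← Real.exp_add, show -u + -(t*(p+u)) = -(t*p) + -((1+t)*u) by ring, Real.exp_add]
      ring
    rw [setIntegral_congr_fun measurableSet_Ioi (fun u _ => e1 u), integral_const_mul,
      lapG n ρ h1t]
    have hx : 1/(1+t) - 1 = -(t/(1+t)) := by field_simp; ring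
    rw [hx]
    rw [show (-(t/(1+t)))^n = (-1:ℝ)^n * (t/(1+t))^n by rw [neg_pow]]
    rw [show ρ * -(t/(1+t)) = -(ρ*t/(1+t)) by ring]
    rw [one_div]
    try ring
  rw [setIntegral_congr_fun measurableSet_Ioi step1, hswap,
    setIntegral_congr_fun measurableSet_Ioi step2, integral_const_mul]
  ring
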